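/- Let C be a category with finite products, terminal object 1, and Φ a product-closed filter of subobjects of 1. Define Hom_{C_Φ}(X, Y) = colim_{V ∈ Φ^op} Hom_C(X × V, Y), with composition of [f : X × U → Y] and [g : Y × V → Z] given by [g ∘ (f × id_V) : X × (U × V) → Z] (using the canonical isomorphism (X × U) × V ≅ X × (U × V)). Then this composition is well-defined on equivalence classes and associative, so C_Φ is a category with the same objects as C. -/

import Mathlib

set_option linter.unusedSectionVars false
set_option linter.unusedVariables false

open CategoryTheory CategoryTheory.Limits

universe v u

variable {C : Type u} [Category.{v} C] [HasTerminal C] [HasBinaryProducts C]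

/-- Maps into a subobject of the terminal object are unique. -/
lemma hom_to_subterminal_subsingleton (A : C) (V : Subobject (⊤_ C)) :
    Subsingleton (A ⟶ (V : C)) :=
  ⟨fun u v => (cancel_mono V.arrow).1 (Subsingleton.elim _ _)⟩

instance prod_subterminal_mono (U V : Subobject (⊤_ C)) :
    Mono (terminal.from ((U : C) ⨯ (V : C))) := by
  constructor
  intro A f g _
  haveI := hom_to_subterminal_subsingleton (C := C) A U
  haveI := hom_to_subterminal_subsingleton (C := C) A V
  apply Limits.prod.hom_ext
  · exact Subsingleton.elim _ _
  · exact Subsingleton.elim _ _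

/-- The product of two subobjects `U, V` of the terminal object, as a
subobject of the terminal object. This is the meet of `U` and `V` in `Sub(1)`. -/
noncomputable def prodSub (U V : Subobject (⊤_ C)) : Subobject (⊤_ C) :=
  Subobject.mk (terminal.from ((U : C) ⨯ (V : C)))

variable (Φ : Set (Subobject (⊤_ C)))

/-- A representative of a morphism `X ⟶ Y` in the filter quotient `C_Φ`:
a morphism `X × V ⟶ Y` for some `V ∈ Φ`. -/
structure FQRep (X Y : C) where
  V : Subobject (⊤_ C)
  mem : V ∈ Φ
  hom : X ⨯ (V : C) ⟶ Y

/-- The restriction of a representative `f : X × V ⟶ Y` along `U ≤ V`. -/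
noncomputable def FQRep.restrict {X Y : C} (f : FQRep Φ X Y) {U : Subobject (⊤_ C)}
    (h : U ≤ f.V) : X ⨯ (U : C) ⟶ Y :=
  Limits.prod.map (𝟙 X) (Subobject.ofLE U f.V h) ≫ f.hom

/-- Two representatives are related iff their restrictions to some common
`U ∈ Φ` agree. -/
def filterRel {X Y : C} (f g : FQRep Φ X Y) : Prop :=
  ∃ U ∈ Φ, ∃ (h₁ : U ≤ f.V) (h₂ : U ≤ g.V), f.restrict Φ h₁ = g.restrict Φ h₂

/-- Composition of representatives: for `f : X × U ⟶ Y` and `g : Y × V ⟶ Z`,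
the composite `g ∘ (f × id_V) : X × (U × V) ⟶ Z` (using the canonical
isomorphism `(X × U) × V ≅ X × (U × V)`), a representative over `U × V ∈ Φ`. -/
noncomputable def compFQRep {X Y Z : C}
    (hProd : ∀ U ∈ Φ, ∀ V ∈ Φ, prodSub U V ∈ Φ)
    (f : FQRep Φ X Y) (g : FQRep Φ Y Z) : FQRep Φ X Z where
  V := prodSub f.V g.V
  mem := hProd _ f.mem _ g.mem
  hom := Limits.prod.map (𝟙 X) (Subobject.underlyingIso _).hom ≫
    (Limits.prod.associator X (f.V : C) (g.V : C)).inv ≫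
    Limits.prod.map f.hom (𝟙 (g.V : C)) ≫ g.hom


section Helpers

variable {Φ}

lemma le_of_hom_sub {U V : Subobject (⊤_ C)} (u : (U : C) ⟶ (V : C)) : U ≤ V :=
  Subobject.le_of_comm u (Subsingleton.elim _ _)

/-- Packaging a pair of maps into the underlying object of `prodSub`. -/
noncomputable def homToProdSub {A : C} {U V : Subobject (⊤_ C)}
    (a : A ⟶ (U : C)) (b : A ⟶ (V : C)) : A ⟶ ((prodSub U V : Subobject (⊤_ C)) : C) :=
  Limits.prod.lift a b ≫ (Subobject.underlyingIso _).inv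

lemma hom_ext_over_sub {A X : C} (V : Subobject (⊤_ C)) {φ ψ : A ⟶ X ⨯ (V : C)}
    (h : φ ≫ Limits.prod.fst = ψ ≫ Limits.prod.fst) : φ = ψ := by
  haveI := hom_to_subterminal_subsingleton (C := C) A V
  exact Limits.prod.hom_ext h (Subsingleton.elim _ _)

lemma restrict_eq {X Y : C} (f : FQRep Φ X Y) {U : Subobject (⊤_ C)} (h : U ≤ f.V)
    (u : (U : C) ⟶ (f.V : C)) :
    f.restrict Φ h = Limits.prod.map (𝟙 X) u ≫ f.hom := by
  haveI := hom_to_subterminal_subsingleton (C := C) (U : C) f.V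
  rw [FQRep.restrict, Subsingleton.elim (Subobject.ofLE U f.V h) u]

lemma map_id_eq_lift {A X B : C} (u : A ⟶ B) :
    Limits.prod.map (𝟙 X) u = Limits.prod.lift Limits.prod.fst (Limits.prod.snd ≫ u) := by
  ext <;> simp [prod.lift_fst, prod.lift_snd]

lemma comp_hom_eq {X Y Z : C} (hProd : ∀ U ∈ Φ, ∀ V ∈ Φ, prodSub U V ∈ Φ)
    (f : FQRep Φ X Y) (g : FQRep Φ Y Z) :
    (compFQRep Φ hProd f g).hom =
      Limits.prod.lift
        (Limits.prod.map (𝟙 X) ((Subobject.underlyingIso _).hom ≫ Limits.prod.fst) ≫ f.hom)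
        (Limits.prod.snd ≫ (Subobject.underlyingIso _).hom ≫ Limits.prod.snd) ≫ g.hom := by
  simp only [compFQRep, ← Category.assoc]
  congr 1
  ext <;> simp [map_id_eq_lift, compFQRep, prodSub, prod.lift_fst, prod.lift_snd, prod.lift_fst_assoc, prod.lift_snd_assoc]

lemma restrict_comp_eq {X Y Z : C} (hProd : ∀ U ∈ Φ, ∀ V ∈ Φ, prodSub U V ∈ Φ)
    (f : FQRep Φ X Y) (g : FQRep Φ Y Z) {W : Subobject (⊤_ C)}
    (hW : W ≤ (compFQRep Φ hProd f g).V)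
    (a : (W : C) ⟶ (f.V : C)) (b : (W : C) ⟶ (g.V : C)) :
    (compFQRep Φ hProd f g).restrict Φ hW =
      Limits.prod.lift (Limits.prod.map (𝟙 X) a ≫ f.hom) (Limits.prod.snd ≫ b) ≫ g.hom := by
  erw [restrict_eq _ hW (homToProdSub a b), comp_hom_eq, ← Category.assoc, prod.comp_lift]
  apply eq_whisker
  apply hom_ext_over_sub (C := C) g.V
  erw [prod.lift_fst, prod.lift_fst, ← Category.assoc, prod.map_map]
  simp [homToProdSub, prodSub, compFQRep, prod.lift_fst, prod.lift_snd, prod.lift_fst_assoc, prod.lift_snd_assoc]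

lemma map_comp_hom_eq {X Y Z A : C} (hProd : ∀ U ∈ Φ, ∀ V ∈ Φ, prodSub U V ∈ Φ)
    (f : FQRep Φ X Y) (g : FQRep Φ Y Z)
    (u : A ⟶ (((compFQRep Φ hProd f g).V : Subobject (⊤_ C)) : C)) :
    Limits.prod.map (𝟙 X) u ≫ (compFQRep Φ hProd f g).hom =
      Limits.prod.lift
        (Limits.prod.map (𝟙 X) (u ≫ (Subobject.underlyingIso _).hom ≫ Limits.prod.fst) ≫ f.hom)
        (Limits.prod.snd ≫ u ≫ (Subobject.underlyingIso _).hom ≫ Limits.prod.snd) ≫ g.hom := by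
  erw [comp_hom_eq, ← Category.assoc, prod.comp_lift]
  apply eq_whisker
  apply hom_ext_over_sub (C := C) g.V
  erw [prod.lift_fst, prod.lift_fst, ← Category.assoc, prod.map_map]
  simp
  rfl

lemma lift_comp_hom_eq {X Y Z Q : C} (hProd : ∀ U ∈ Φ, ∀ V ∈ Φ, prodSub U V ∈ Φ)
    (g : FQRep Φ X Y) (h : FQRep Φ Y Z) (α : Q ⟶ X)
    (v : Q ⟶ (((compFQRep Φ hProd g h).V : Subobject (⊤_ C)) : C)) :
    Limits.prod.lift α v ≫ (compFQRep Φ hProd g h).hom =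
      Limits.prod.lift
        (Limits.prod.lift α (v ≫ (Subobject.underlyingIso _).hom ≫ Limits.prod.fst) ≫ g.hom)
        (v ≫ (Subobject.underlyingIso _).hom ≫ Limits.prod.snd) ≫ h.hom := by
  erw [comp_hom_eq, ← Category.assoc, prod.comp_lift]
  apply eq_whisker
  apply hom_ext_over_sub (C := C) h.V
  erw [prod.lift_fst, prod.lift_fst, ← Category.assoc]
  apply eq_whisker
  apply hom_ext_over_sub (C := C) g.V
  simp only [map_id_eq_lift, Category.assoc, prod.comp_lift_assoc, prod.comp_lift,
    prod.lift_fst]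
  erw [Category.assoc, prod.lift_fst, prod.lift_fst]

/-- Restricting along `w ≫ ofLE` factors through the restriction (first slot). -/
lemma map_ofLE_comp {X Y A : C} (f : FQRep Φ X Y) {U : Subobject (⊤_ C)} (h : U ≤ f.V)
    (w : A ⟶ (U : C)) :
    Limits.prod.map (𝟙 X) (w ≫ Subobject.ofLE U f.V h) ≫ f.hom =
      Limits.prod.map (𝟙 X) w ≫ f.restrict Φ h := by
  rw [FQRep.restrict, ← Category.assoc, prod.map_map]
  simp

/-- Restricting along `w ≫ ofLE` factors through the restriction (second slot). -/
lemma lift_ofLE_comp {X Y A B : C} (g : FQRep Φ X Y) {U : Subobject (⊤_ C)} (h : U ≤ g.V)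
    (α : A ⟶ X) (β : A ⟶ B) (w : B ⟶ (U : C)) :
    Limits.prod.lift α (β ≫ w ≫ Subobject.ofLE U g.V h) ≫ g.hom =
      Limits.prod.lift α (β ≫ w) ≫ g.restrict Φ h := by
  rw [FQRep.restrict]
  simp only [prod.lift_map_assoc, Category.comp_id, Category.assoc]

end Helpers

/-- The composition of the filter quotient `C_Φ` is well defined on
equivalence classes of representatives and associative; hence `C_Φ` is a
category with the same objects as `C`. -/
theorem filterQuotient_comp_wellDefined_and_assoc
    (hTop : ⊤ ∈ Φ)
    (hProd : ∀ U ∈ Φ, ∀ V ∈ Φ, prodSub U V ∈ Φ)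
    (hUp : ∀ U ∈ Φ, ∀ V : Subobject (⊤_ C), U ≤ V → V ∈ Φ) :
    (∀ (X Y Z : C) (f f' : FQRep Φ X Y) (g g' : FQRep Φ Y Z),
      filterRel Φ f f' → filterRel Φ g g' →
        filterRel Φ (compFQRep Φ hProd f g) (compFQRep Φ hProd f' g')) ∧
    (∀ (X Y Z W : C) (f : FQRep Φ X Y) (g : FQRep Φ Y Z) (h : FQRep Φ Z W),
      filterRel Φ (compFQRep Φ hProd (compFQRep Φ hProd f g) h)
        (compFQRep Φ hProd f (compFQRep Φ hProd g h))) := by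
  constructor
  · rintro X Y Z f f' g g' ⟨U₀, hU₀, hf, hf', hff'⟩ ⟨V₀, hV₀, hg, hg', hgg'⟩
    have hWmem : prodSub U₀ V₀ ∈ Φ := hProd _ hU₀ _ hV₀
    set w₁ : ((prodSub U₀ V₀ : Subobject (⊤_ C)) : C) ⟶ (U₀ : C) :=
      (Subobject.underlyingIso _).hom ≫ Limits.prod.fst with hw₁
    set w₂ : ((prodSub U₀ V₀ : Subobject (⊤_ C)) : C) ⟶ (V₀ : C) :=
      (Subobject.underlyingIso _).hom ≫ Limits.prod.snd with hw₂
    have hle : prodSub U₀ V₀ ≤ (compFQRep Φ hProd f g).V :=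
      le_of_hom_sub (homToProdSub (w₁ ≫ Subobject.ofLE _ _ hf) (w₂ ≫ Subobject.ofLE _ _ hg))
    have hle' : prodSub U₀ V₀ ≤ (compFQRep Φ hProd f' g').V :=
      le_of_hom_sub (homToProdSub (w₁ ≫ Subobject.ofLE _ _ hf') (w₂ ≫ Subobject.ofLE _ _ hg'))
    refine ⟨prodSub U₀ V₀, hWmem, hle, hle', ?_⟩
    rw [restrict_comp_eq hProd f g hle (w₁ ≫ Subobject.ofLE _ _ hf)
          (w₂ ≫ Subobject.ofLE _ _ hg),
        restrict_comp_eq hProd f' g' hle' (w₁ ≫ Subobject.ofLE _ _ hf')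
          (w₂ ≫ Subobject.ofLE _ _ hg'),
        map_ofLE_comp, map_ofLE_comp, lift_ofLE_comp, lift_ofLE_comp, hff', hgg']
  · intro X Y Z W f g h
    refine ⟨(compFQRep Φ hProd (compFQRep Φ hProd f g) h).V,
      (compFQRep Φ hProd (compFQRep Φ hProd f g) h).mem, le_refl _, ?_, ?_⟩
    case refine_1 =>
      exact le_of_hom_sub (homToProdSub
        (((Subobject.underlyingIso _).hom ≫ Limits.prod.fst) ≫
          (Subobject.underlyingIso _).hom ≫ Limits.prod.fst)
        (homToProdSub
          (((Subobject.underlyingIso _).hom ≫ Limits.prod.fst) ≫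
            (Subobject.underlyingIso _).hom ≫ Limits.prod.snd)
          ((Subobject.underlyingIso _).hom ≫ Limits.prod.snd)))
    rw [restrict_comp_eq hProd (compFQRep Φ hProd f g) h (le_refl _)
          ((Subobject.underlyingIso _).hom ≫ Limits.prod.fst)
          ((Subobject.underlyingIso _).hom ≫ Limits.prod.snd),
        restrict_comp_eq (W := (compFQRep Φ hProd (compFQRep Φ hProd f g) h).V) hProd f (compFQRep Φ hProd g h) _
          (((Subobject.underlyingIso _).hom ≫ Limits.prod.fst) ≫
            (Subobject.underlyingIso _).hom ≫ Limits.prod.fst)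
          (homToProdSub
            ((((Subobject.underlyingIso _).hom ≫ Limits.prod.fst) ≫
              (Subobject.underlyingIso _).hom ≫ Limits.prod.snd))
            ((Subobject.underlyingIso _).hom ≫ Limits.prod.snd)),
        map_comp_hom_eq hProd f g,
        lift_comp_hom_eq hProd g h]
    simp [homToProdSub, prodSub, compFQRep, prod.lift_fst, prod.lift_snd, prod.lift_fst_assoc, prod.lift_snd_assoc]
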